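/- Let R be a commutative ring and S an R-algebra. Suppose S is the union of a directed family (S_i) of R-subalgebras such that each S_i is formally étale over R. Then S is formally étale over R. -/

import Mathlib

universe u

/-- Let `R` be a commutative ring and `S` an `R`-algebra which is the union of a
directed family of `R`-subalgebras, each of which is formally étale over `R`.
Then `S` is formally étale over `R`. -/
theorem stmt_12 (R S : Type u) [CommRing R] [CommRing S] [Algebra R S]
    (ι : Type*) (A : ι → Subalgebra R S) (hdir : Directed (· ≤ ·) A)
    (hunion : ∀ s : S, ∃ i, s ∈ A i)
    (hetale : ∀ i, Algebra.FormallyEtale R (A i)) :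
    Algebra.FormallyEtale R S := by
  rw [Algebra.FormallyEtale.iff_comp_bijective]
  intro B _ _ I hI
  have hbij : ∀ i, Function.Bijective
      ((Ideal.Quotient.mkₐ R I).comp : ((A i) →ₐ[R] B) → ((A i) →ₐ[R] B ⧸ I)) :=
    fun i => by haveI := hetale i; exact Algebra.FormallyEtale.comp_bijective R (A i) I hI
  constructor
  · intro g₁ g₂ h
    ext s
    obtain ⟨i, hs⟩ := hunion s
    have h' : g₁.comp (A i).val = g₂.comp (A i).val := by
      apply (hbij i).injective
      rw [← AlgHom.comp_assoc, ← AlgHom.comp_assoc, h]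
    exact congrArg (fun (φ : (A i) →ₐ[R] B) => φ ⟨s, hs⟩) h'
  · intro f
    choose gi hgi using fun i => (hbij i).surjective (f.comp (A i).val)
    -- compatibility
    have compat : ∀ i l (hil : A i ≤ A l) (s : S) (hs : s ∈ A i),
        gi l ⟨s, hil hs⟩ = gi i ⟨s, hs⟩ := by
      intro i l hil s hs
      have h1 : (gi l).comp (Subalgebra.inclusion hil) = gi i := by
        apply (hbij i).injective
        rw [← AlgHom.comp_assoc, hgi l, hgi i]
        ext x
        rfl
      exact congrArg (fun (φ : (A i) →ₐ[R] B) => φ ⟨s, hs⟩) h1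
    have key : ∀ (s : S) i (hs : s ∈ A i) j (hs' : s ∈ A j),
        gi i ⟨s, hs⟩ = gi j ⟨s, hs'⟩ := by
      intro s i hs j hs'
      obtain ⟨l, hil, hjl⟩ := hdir i j
      rw [← compat i l hil s hs, ← compat j l hjl s hs']
    let g : S → B := fun s => gi (hunion s).choose ⟨s, (hunion s).choose_spec⟩
    have gval : ∀ (s : S) i (hs : s ∈ A i), g s = gi i ⟨s, hs⟩ := by
      intro s i hs
      exact key s _ (hunion s).choose_spec i hs
    have two_mem : ∀ (s t : S), ∃ l, s ∈ A l ∧ t ∈ A l := by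
      intro s t
      obtain ⟨i, hi⟩ := hunion s
      obtain ⟨j, hj⟩ := hunion t
      obtain ⟨l, hil, hjl⟩ := hdir i j
      exact ⟨l, hil hi, hjl hj⟩
    refine ⟨⟨⟨⟨⟨g, ?_⟩, ?_⟩, ?_, ?_⟩, ?_⟩, ?_⟩
    · -- map_one
      obtain ⟨i, hi⟩ := hunion (1 : S)
      rw [gval 1 i hi]
      exact map_one (gi i)
    · -- map_mul
      intro s t
      obtain ⟨l, hs, ht⟩ := two_mem s t
      show g (s * t) = g s * g t
      rw [gval s l hs, gval t l ht, gval (s * t) l (mul_mem hs ht)]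
      exact map_mul (gi l) ⟨s, hs⟩ ⟨t, ht⟩
    · -- map_zero
      obtain ⟨i, hi⟩ := hunion (0 : S)
      show g 0 = 0
      rw [gval 0 i hi]
      exact map_zero (gi i)
    · -- map_add
      intro s t
      obtain ⟨l, hs, ht⟩ := two_mem s t
      show g (s + t) = g s + g t
      rw [gval s l hs, gval t l ht, gval (s + t) l (add_mem hs ht)]
      exact map_add (gi l) ⟨s, hs⟩ ⟨t, ht⟩
    · -- commutes
      intro r
      obtain ⟨i, hi⟩ := hunion (algebraMap R S r)
      show g (algebraMap R S r) = algebraMap R B r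
      rw [gval _ i hi]
      have : (⟨algebraMap R S r, hi⟩ : A i) = algebraMap R (A i) r := rfl
      rw [this]
      exact (gi i).commutes r
    · -- lifts f
      ext s
      obtain ⟨i, hi⟩ := hunion s
      show Ideal.Quotient.mkₐ R I (g s) = f s
      rw [gval s i hi]
      have := congrArg (fun (φ : (A i) →ₐ[R] B ⧸ I) => φ ⟨s, hi⟩) (hgi i)
      simpa using this
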